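/- For all constants K > 0 and M > 0 there exists C > 0 with the following property: for every real N ≥ 1, every complex number d with |d| ≤ K·N, and every measurable function E : [−N^{−1/2}, 0] → ℂ with |E(t)| ≤ M·N·|t|³ for all t ∈ [−N^{−1/2}, 0], one has | ∫_{−N^{−1/2}}^{0} exp( N t + d t²/2 + E(t) ) dt − ( 1/N + d/N³ ) | ≤ C/N³. -/

import Mathlib

open Complex Real MeasureTheory intervalIntegral

lemma pow4_le_exp {x : ℝ} (hx : 0 ≤ x) : x ^ 4 ≤ 256 * Real.exp x := by
  have h1 : x / 4 ≤ Real.exp (x / 4) := le_trans (by linarith) (Real.add_one_le_exp (x / 4))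
  have h2 : (x / 4) ^ 4 ≤ Real.exp (x / 4) ^ 4 :=
    pow_le_pow_left₀ (by positivity) h1 4
  have h3 : Real.exp (x / 4) ^ 4 = Real.exp x := by
    rw [← Real.exp_nat_mul]; congr 1; push_cast; ring
  calc x ^ 4 = 256 * (x / 4) ^ 4 := by ring
    _ ≤ 256 * Real.exp (x / 4) ^ 4 := by linarith
    _ = 256 * Real.exp x := by rw [h3]

lemma hasDerivAt_main (N : ℝ) (hN : N ≠ 0) (d : ℂ) (x : ℝ) :
    HasDerivAt (fun t : ℝ => Complex.exp ((N:ℂ) * t) *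
      ((2*(N:ℂ)^2 + d * ((N:ℂ)^2*(t:ℂ)^2 - 2*(N:ℂ)*(t:ℂ) + 2)) / (2*(N:ℂ)^3)))
      (Complex.exp ((N:ℂ) * x) * (1 + d * (x:ℂ)^2 / 2)) x := by
  have hNc : (N:ℂ) ≠ 0 := by exact_mod_cast hN
  have he : HasDerivAt (fun z : ℂ => Complex.exp ((N:ℂ)*z))
      ((N:ℂ) * Complex.exp ((N:ℂ)*(x:ℂ))) (x:ℂ) := by
    simpa [mul_comm] using ((hasDerivAt_id ((x:ℂ))).const_mul (N:ℂ)).cexp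
  have hp : HasDerivAt (fun z : ℂ =>
        (2*(N:ℂ)^2 + d * ((N:ℂ)^2*z^2 - 2*(N:ℂ)*z + 2)) / (2*(N:ℂ)^3))
      (d * (2*(N:ℂ)^2*(x:ℂ) - 2*(N:ℂ)) / (2*(N:ℂ)^3)) (x:ℂ) := by
    have h0 := (((((hasDerivAt_pow 2 ((x:ℂ))).const_mul ((N:ℂ)^2)).sub
        ((hasDerivAt_id ((x:ℂ))).const_mul (2*(N:ℂ)))).add_const (2:ℂ)).const_mul d).const_add
        (2*(N:ℂ)^2)
    have h1 := h0.div_const (2*(N:ℂ)^3)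
    refine h1.congr_deriv ?_
    push_cast; ring
  have h := he.mul hp
  have h2 : HasDerivAt (fun z : ℂ => Complex.exp ((N:ℂ)*z) *
      ((2*(N:ℂ)^2 + d * ((N:ℂ)^2*z^2 - 2*(N:ℂ)*z + 2)) / (2*(N:ℂ)^3)))
      (Complex.exp ((N:ℂ) * x) * (1 + d * (x:ℂ)^2 / 2)) (x:ℂ) := by
    refine h.congr_deriv ?_
    field_simp
    ring
  exact h2.comp_ofReal

lemma hasDerivAt_cube (N : ℝ) (hN : N ≠ 0) (x : ℝ) :
    HasDerivAt (fun t : ℝ => Real.exp (N * t) *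
      ((-(N^3*t^3) + 3*N^2*t^2 - 6*N*t + 6) / N^4))
      (Real.exp (N * x) * (-x)^3) x := by
  have he : HasDerivAt (fun t : ℝ => Real.exp (N * t)) (N * Real.exp (N * x)) x := by
    simpa [mul_comm] using ((hasDerivAt_id x).const_mul N).exp
  have hp : HasDerivAt (fun t : ℝ => (-(N^3*t^3) + 3*N^2*t^2 - 6*N*t + 6) / N^4)
      ((-(3*N^3*x^2) + 6*N^2*x - 6*N) / N^4) x := by
    have h0 := ((((((hasDerivAt_pow 3 x).const_mul (N^3)).neg.add
      ((hasDerivAt_pow 2 x).const_mul (3*N^2))).sub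
      ((hasDerivAt_id x).const_mul (6*N))).add_const (6:ℝ)).div_const (N^4))
    refine h0.congr_deriv ?_
    push_cast; ring
  have h := he.mul hp
  refine h.congr_deriv ?_
  field_simp
  ring

lemma hasDerivAt_quart (N : ℝ) (hN : N ≠ 0) (x : ℝ) :
    HasDerivAt (fun t : ℝ => Real.exp (N * t) *
      ((N^4*t^4 - 4*N^3*t^3 + 12*N^2*t^2 - 24*N*t + 24) / N^5))
      (Real.exp (N * x) * x^4) x := by
  have he : HasDerivAt (fun t : ℝ => Real.exp (N * t)) (N * Real.exp (N * x)) x := by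
    simpa [mul_comm] using ((hasDerivAt_id x).const_mul N).exp
  have hp : HasDerivAt (fun t : ℝ => (N^4*t^4 - 4*N^3*t^3 + 12*N^2*t^2 - 24*N*t + 24) / N^5)
      ((4*N^4*x^3 - 12*N^3*x^2 + 24*N^2*x - 24*N) / N^5) x := by
    have h0 := (((((((hasDerivAt_pow 4 x).const_mul (N^4)).sub
      ((hasDerivAt_pow 3 x).const_mul (4*N^3))).add
      ((hasDerivAt_pow 2 x).const_mul (12*N^2))).sub
      ((hasDerivAt_id x).const_mul (24*N))).add_const (24:ℝ)).div_const (N^5))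
    refine h0.congr_deriv ?_
    push_cast; ring
  have h := he.mul hp
  refine h.congr_deriv ?_
  field_simp
  ring

lemma integral_cube_le (N a : ℝ) (hN : 0 < N) (ha : a ≤ 0) :
    ∫ t in a..0, Real.exp (N*t) * (-t)^3 ≤ 6/N^4 := by
  rw [intervalIntegral.integral_eq_sub_of_hasDerivAt
    (fun x _ => hasDerivAt_cube N hN.ne' x)
    (Continuous.intervalIntegrable (by continuity) _ _)]
  have h1 : Real.exp (N*0) * ((-(N^3*0^3) + 3*N^2*0^2 - 6*N*0 + 6) / N^4) = 6/N^4 := by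
    simp
  rw [h1]
  have hna : 0 ≤ -a := neg_nonneg.mpr ha
  have hnum : 0 ≤ -(N^3*a^3) + 3*N^2*a^2 - 6*N*a + 6 := by
    nlinarith [mul_nonneg (pow_nonneg hN.le 3) (pow_nonneg hna 3),
      mul_nonneg hN.le hna, sq_nonneg (N*a)]
  have h2 : 0 ≤ Real.exp (N*a) * ((-(N^3*a^3) + 3*N^2*a^2 - 6*N*a + 6) / N^4) :=
    mul_nonneg (Real.exp_pos _).le (div_nonneg hnum (by positivity))
  linarith

lemma integral_quart_le (N a : ℝ) (hN : 0 < N) (ha : a ≤ 0) :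
    ∫ t in a..0, Real.exp (N*t) * t^4 ≤ 24/N^5 := by
  rw [intervalIntegral.integral_eq_sub_of_hasDerivAt
    (fun x _ => hasDerivAt_quart N hN.ne' x)
    (Continuous.intervalIntegrable (by continuity) _ _)]
  have h1 : Real.exp (N*0) * ((N^4*0^4 - 4*N^3*0^3 + 12*N^2*0^2 - 24*N*0 + 24) / N^5) = 24/N^5 := by
    simp
  rw [h1]
  have hna : 0 ≤ -a := neg_nonneg.mpr ha
  have hnum : 0 ≤ N^4*a^4 - 4*N^3*a^3 + 12*N^2*a^2 - 24*N*a + 24 := by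
    nlinarith [mul_nonneg (pow_nonneg hN.le 3) (pow_nonneg hna 3),
      mul_nonneg hN.le hna, sq_nonneg (N*a), mul_nonneg (pow_nonneg hN.le 4) (pow_nonneg hna 4)]
  have h2 : 0 ≤ Real.exp (N*a) * ((N^4*a^4 - 4*N^3*a^3 + 12*N^2*a^2 - 24*N*a + 24) / N^5) :=
    mul_nonneg (Real.exp_pos _).le (div_nonneg hnum (by positivity))
  linarith

set_option maxHeartbeats 4000000 in
theorem laplace_near_origin (K M : ℝ) (hK : 0 < K) (hM : 0 < M) :
    ∃ C > (0 : ℝ), ∀ (N : ℝ), 1 ≤ N → ∀ (d : ℂ), ‖d‖ ≤ K * N →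
      ∀ E : ℝ → ℂ, Measurable E →
        (∀ t ∈ Set.Icc (-1 / Real.sqrt N) (0 : ℝ), ‖E t‖ ≤ M * N * |t| ^ 3) →
        ‖
            ((∫ t in (-1 / Real.sqrt N)..(0 : ℝ),
                Complex.exp ((N : ℂ) * t + d * (t : ℂ) ^ 2 / 2 + E t))
              - (1 / (N : ℂ) + d / (N : ℂ) ^ 3))‖
          ≤ C / N ^ 3 := by
  
  set B := K / 2 + M with hBdef
  set A0 := Real.exp B + 1 + B with hA0def
  set A := (1 + A0) * B ^ 2 with hAdef
  have hB0 : 0 < B := by positivity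
  have hA00 : 0 < A0 := by positivity
  have hA0' : 0 < A := by positivity
  clear_value A A0 B
  refine ⟨256 * (2 + 5 * K) + 24 * A + 6 * M, by nlinarith, ?_⟩
  intro N hN d hd E hEm hEb
  have hN0 : (0:ℝ) < N := lt_of_lt_of_le one_pos hN
  have hNne : N ≠ 0 := hN0.ne'
  have hNc : (N:ℂ) ≠ 0 := by exact_mod_cast hNne
  set s := Real.sqrt N with hsdef
  have hs1 : 1 ≤ s := by
    rw [hsdef, show (1:ℝ) = Real.sqrt 1 by simp]
    exact Real.sqrt_le_sqrt hN
  have hs0 : 0 < s := lt_of_lt_of_le one_pos hs1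
  have hs2 : s ^ 2 = N := Real.sq_sqrt hN0.le
  set a : ℝ := -1 / s with hadef
  have ha' : a = -(1/s) := by rw [hadef]; ring
  have ha0 : a ≤ 0 := by rw [ha']; simp; positivity
  have haa : a ^ 2 = 1 / N := by rw [ha', ← hs2]; field_simp
  have hNa : N * a = -s := by
    rw [ha', ← hs2]; field_simp
  have hsN : s ≤ N := by nlinarith
  clear_value a s
  -- interval facts
  have hIoc : Set.uIoc a 0 ⊆ Set.Icc a 0 := by
    rw [Set.uIoc_of_le ha0]
    exact Set.Ioc_subset_Icc_self
  have hIcc : ∀ t ∈ Set.Icc a 0, t^2 ≤ 1/N ∧ -t ≤ 1 := by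
    intro t ht
    obtain ⟨ht1, ht2⟩ := ht
    rw [ha'] at ht1
    have hsinv : 1/s ≤ 1 := by rw [div_le_one hs0]; exact hs1
    constructor
    · have h1 : -t ≤ 1/s := by linarith
      have h2 : (0:ℝ) ≤ -t := by linarith
      have h3 : (-t)*(-t) ≤ (1/s)*(1/s) := mul_le_mul h1 h1 h2 (by positivity)
      have h4 : (1/s)*(1/s) = 1/N := by rw [← hs2]; field_simp
      nlinarith
    · linarith
  -- bound on |z|
  have hzbd : ∀ t ∈ Set.Icc a 0, ‖d * (t:ℂ)^2 / 2 + E t‖ ≤ B * (N * t^2) := by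
    intro t ht
    obtain ⟨ht2, ht3⟩ := hIcc t ht
    have hE := hEb t ht
    have h4 : ‖d * (t:ℂ)^2 / 2‖ ≤ K * N * t^2 / 2 := by
      rw [norm_div, norm_mul, norm_pow, Complex.norm_real, Real.norm_eq_abs, Complex.norm_two]
      have habs : |t|^2 = t^2 := sq_abs t
      rw [habs]
      have := mul_le_mul_of_nonneg_right hd (sq_nonneg t)
      linarith
    have h5 : M * N * |t|^3 ≤ M * N * t^2 := by
      have h6 : |t|^3 = t^2 * (-t) := by
        rw [abs_of_nonpos ht.2]; ring
      rw [h6]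
      have h7 : t^2 * (-t) ≤ t^2 * 1 := mul_le_mul_of_nonneg_left ht3 (sq_nonneg t)
      have h8 := mul_le_mul_of_nonneg_left h7 (mul_nonneg hM.le hN0.le)
      nlinarith [h8]
    calc ‖d*(t:ℂ)^2/2 + E t‖
        ≤ ‖d*(t:ℂ)^2/2‖ + ‖E t‖ := norm_add_le _ _
      _ ≤ K*N*t^2/2 + M*N*t^2 := by linarith
      _ = B * (N * t^2) := by rw [hBdef]; ring
  -- measurability and integrability of f
  have hfm : Measurable (fun t : ℝ => Complex.exp ((N:ℂ) * t + d * (t:ℂ)^2 / 2 + E t)) := by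
    apply Complex.measurable_exp.comp
    exact ((Complex.measurable_ofReal.const_mul ((N:ℂ))).add
      (((Complex.measurable_ofReal.pow_const 2).const_mul d).div_const 2)).add hEm
  have hre : ∀ t ∈ Set.Icc a 0,
      ‖Complex.exp ((N:ℂ)*t + d*(t:ℂ)^2/2 + E t)‖ ≤ Real.exp B := by
    intro t ht
    rw [Complex.norm_exp]
    apply Real.exp_le_exp.mpr
    have h1 : ((N:ℂ)*t + d*(t:ℂ)^2/2 + E t).re = N*t + (d*(t:ℂ)^2/2 + E t).re := by
      simp [Complex.add_re, ← Complex.ofReal_mul]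
      ring
    rw [h1]
    have h2 := (Complex.re_le_norm _).trans (hzbd t ht)
    have h3 : N * t ≤ 0 := mul_nonpos_of_nonneg_of_nonpos hN0.le ht.2
    have h4 : B * (N*t^2) ≤ B * 1 := by
      apply mul_le_mul_of_nonneg_left _ hB0.le
      have := (hIcc t ht).1
      rw [le_div_iff₀ hN0] at this
      nlinarith
    rw [mul_one] at h4
    linarith
  have hfi : IntervalIntegrable (fun t : ℝ => Complex.exp ((N:ℂ)*t + d*(t:ℂ)^2/2 + E t))
      volume a 0 := by
    rw [intervalIntegrable_iff, Set.uIoc_of_le ha0]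
    apply MeasureTheory.Integrable.mono' (g := fun _ => Real.exp B)
      (integrableOn_const measure_Ioc_lt_top.ne) hfm.aestronglyMeasurable
    filter_upwards [ae_restrict_mem measurableSet_Ioc] with t ht
    exact hre t (Set.Ioc_subset_Icc_self ht)
  -- the approximating function m
  set m : ℝ → ℂ := fun t => Complex.exp ((N:ℂ)*t) * (1 + d*(t:ℂ)^2/2) with hmdef
  have hmc : Continuous m := by
    apply Continuous.mul
    · exact Complex.continuous_exp.comp (continuous_const.mul Complex.continuous_ofReal)
    · fun_prop
  have hmi : IntervalIntegrable m volume a 0 := hmc.intervalIntegrable a 0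
  set Φa : ℂ := Complex.exp ((N:ℂ)*a) *
      ((2*(N:ℂ)^2 + d * ((N:ℂ)^2*(a:ℂ)^2 - 2*(N:ℂ)*(a:ℂ) + 2)) / (2*(N:ℂ)^3)) with hΦa
  have hmval : ∫ t in a..(0:ℝ), m t = (1/(N:ℂ) + d/(N:ℂ)^3) - Φa := by
    rw [hmdef]
    rw [intervalIntegral.integral_eq_sub_of_hasDerivAt
      (f := fun t : ℝ => Complex.exp ((N:ℂ) * t) *
        ((2*(N:ℂ)^2 + d * ((N:ℂ)^2*(t:ℂ)^2 - 2*(N:ℂ)*(t:ℂ) + 2)) / (2*(N:ℂ)^3)))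
      (fun x _ => hasDerivAt_main N hNne d x) hmi]
    rw [hΦa]
    push_cast
    rw [mul_zero, Complex.exp_zero]
    field_simp
    ring
  have hsplit : (∫ t in a..(0:ℝ), Complex.exp ((N:ℂ)*t + d*(t:ℂ)^2/2 + E t))
        - (1/(N:ℂ) + d/(N:ℂ)^3)
      = (∫ t in a..(0:ℝ), (Complex.exp ((N:ℂ)*t + d*(t:ℂ)^2/2 + E t) - m t)) - Φa := by
    rw [intervalIntegral.integral_sub hfi hmi, hmval]
    ring
  -- pointwise bound on the error integrand
  set bnd : ℝ → ℝ := fun t => A*N^2*(Real.exp (N*t)*t^4) + M*N*(Real.exp (N*t)*(-t)^3)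
    with hbnddef
  have hbnd_int1 : IntervalIntegrable (fun t => Real.exp (N*t)*t^4) volume a 0 :=
    Continuous.intervalIntegrable (by continuity) _ _
  have hbnd_int2 : IntervalIntegrable (fun t => Real.exp (N*t)*(-t)^3) volume a 0 :=
    Continuous.intervalIntegrable (by continuity) _ _
  have hbnd_int : IntervalIntegrable bnd volume a 0 :=
    (hbnd_int1.const_mul _).add (hbnd_int2.const_mul _)
  have herr_ptwise : ∀ t ∈ Set.Icc a 0,
      ‖Complex.exp ((N:ℂ)*t + d*(t:ℂ)^2/2 + E t) - m t‖ ≤ bnd t := by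
    intro t ht
    have hz := hzbd t ht
    obtain ⟨ht2, ht3⟩ := hIcc t ht
    have hNt2 : N * t^2 ≤ 1 := by
      rw [le_div_iff₀ hN0] at ht2; nlinarith
    set z : ℂ := d*(t:ℂ)^2/2 + E t with hzdef
    have hsplitf : Complex.exp ((N:ℂ)*t + d*(t:ℂ)^2/2 + E t) - m t
        = Complex.exp ((N:ℂ)*t) * ((Complex.exp z - 1 - z) + E t) := by
      rw [hmdef, hzdef]
      rw [show (N:ℂ)*t + d*(t:ℂ)^2/2 + E t = (N:ℂ)*t + (d*(t:ℂ)^2/2 + E t) by ring,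
        Complex.exp_add]
      ring
    rw [hsplitf, norm_mul, Complex.norm_exp]
    have hNtre : ((N:ℂ)*(t:ℂ)).re = N*t := by
      rw [← Complex.ofReal_mul]; exact Complex.ofReal_re _
    rw [hNtre]
    have hzB : ‖z‖ ≤ B := by
      have hh : B * (N * t^2) ≤ B * 1 := mul_le_mul_of_nonneg_left hNt2 hB0.le
      calc ‖z‖ ≤ B * (N*t^2) := hz
        _ ≤ B := by linarith
    have hexpz : ‖Complex.exp z - 1 - z‖ ≤ (1+A0) * (‖z‖)^2 := by
      rcases le_or_gt (‖z‖) 1 with h | h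
      · calc ‖Complex.exp z - 1 - z‖ ≤ (‖z‖)^2 :=
            Complex.norm_exp_sub_one_sub_id_le h
          _ ≤ (1+A0)*(‖z‖)^2 := by nlinarith [sq_nonneg (‖z‖)]
      · have h1 : ‖Complex.exp z - 1 - z‖ ≤ A0 := by
          have t1 : ‖Complex.exp z - 1 - z‖
              ≤ ‖Complex.exp z‖ + 1 + ‖z‖ := by
            calc ‖Complex.exp z - 1 - z‖ ≤ ‖Complex.exp z - 1‖ + ‖z‖ := norm_sub_le _ _
              _ ≤ ‖Complex.exp z‖ + ‖(1:ℂ)‖ + ‖z‖ := by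
                  have := norm_sub_le (Complex.exp z) (1:ℂ); linarith
              _ = ‖Complex.exp z‖ + 1 + ‖z‖ := by rw [norm_one]
          have t2 : ‖Complex.exp z‖ ≤ Real.exp B := by
            rw [Complex.norm_exp]
            exact Real.exp_le_exp.mpr ((Complex.re_le_norm z).trans hzB)
          rw [hA0def]
          linarith
        have h2 : (1:ℝ) ≤ (‖z‖)^2 := by nlinarith
        nlinarith [norm_nonneg (Complex.exp z - 1 - z)]
    have hzsq : (‖z‖)^2 ≤ B^2 * (N*t^2)^2 := by
      nlinarith [norm_nonneg z, mul_nonneg hB0.le (mul_nonneg hN0.le (sq_nonneg t))]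
    have hEt : ‖E t‖ ≤ M*N*(-t)^3 := by
      have h := hEb t ht
      rwa [abs_of_nonpos ht.2] at h
    calc Real.exp (N*t) * ‖(Complex.exp z - 1 - z) + E t‖
        ≤ Real.exp (N*t) * ((1+A0)*(‖z‖)^2 + M*N*(-t)^3) := by
          apply mul_le_mul_of_nonneg_left _ (Real.exp_pos _).le
          calc ‖(Complex.exp z - 1 - z) + E t‖
              ≤ ‖Complex.exp z - 1 - z‖ + ‖E t‖ :=
                norm_add_le _ _
            _ ≤ (1+A0)*(‖z‖)^2 + M*N*(-t)^3 := by linarith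
      _ ≤ Real.exp (N*t) * (A*N^2*t^4 + M*N*(-t)^3) := by
          apply mul_le_mul_of_nonneg_left _ (Real.exp_pos _).le
          have hfin : (1+A0)*(‖z‖)^2 ≤ A*N^2*t^4 := by
            calc (1+A0)*(‖z‖)^2 ≤ (1+A0)*(B^2*(N*t^2)^2) := by nlinarith
              _ = A*N^2*t^4 := by rw [hAdef]; ring
          linarith
      _ = bnd t := by rw [hbnddef]; ring
  have herr : ‖∫ t in a..(0:ℝ),
        (Complex.exp ((N:ℂ)*t + d*(t:ℂ)^2/2 + E t) - m t)‖
      ≤ |∫ t in a..(0:ℝ), bnd t| := by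
    apply intervalIntegral.norm_integral_le_abs_of_norm_le _ hbnd_int
    filter_upwards [ae_restrict_mem measurableSet_uIoc] with t ht
    exact herr_ptwise t (hIoc ht)
  have hbint : ∫ t in a..(0:ℝ), bnd t
      = A*N^2 * (∫ t in a..(0:ℝ), Real.exp (N*t)*t^4)
        + M*N * (∫ t in a..(0:ℝ), Real.exp (N*t)*(-t)^3) := by
    rw [hbnddef]
    rw [intervalIntegral.integral_add (hbnd_int1.const_mul _) (hbnd_int2.const_mul _),
      intervalIntegral.integral_const_mul, intervalIntegral.integral_const_mul]
  have hI4 := integral_quart_le N a hN0 ha0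
  have hI3 := integral_cube_le N a hN0 ha0
  have hI4n : 0 ≤ ∫ t in a..(0:ℝ), Real.exp (N*t)*t^4 :=
    intervalIntegral.integral_nonneg ha0 (fun u _ => by positivity)
  have hI3n : 0 ≤ ∫ t in a..(0:ℝ), Real.exp (N*t)*(-t)^3 :=
    intervalIntegral.integral_nonneg ha0 (fun u hu => by
      have : 0 ≤ -u := neg_nonneg.mpr hu.2
      positivity)
  have hbint_le : |∫ t in a..(0:ℝ), bnd t| ≤ (24*A + 6*M)/N^3 := by
    rw [hbint, _root_.abs_of_nonneg (add_nonneg (mul_nonneg (by positivity) hI4n)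
      (mul_nonneg (by positivity) hI3n))]
    have c1 : A*N^2 * (∫ t in a..(0:ℝ), Real.exp (N*t)*t^4) ≤ A*N^2*(24/N^5) :=
      mul_le_mul_of_nonneg_left hI4 (by positivity)
    have c2 : M*N * (∫ t in a..(0:ℝ), Real.exp (N*t)*(-t)^3) ≤ M*N*(6/N^4) :=
      mul_le_mul_of_nonneg_left hI3 (by positivity)
    have c3 : A*N^2*(24/N^5) + M*N*(6/N^4) = (24*A + 6*M)/N^3 := by
      field_simp
    linarith
  -- bound on Φa
  have hexps : Real.exp (-s) ≤ 256 / N^2 := by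
    have h1 := pow4_le_exp hs0.le
    have h2 : s^4 = N^2 := by rw [← hs2]; ring
    rw [le_div_iff₀ (by positivity)]
    rw [Real.exp_neg]
    have h3 : N^2 ≤ 256 * Real.exp s := by rw [← h2]; exact h1
    have h4 : 0 < Real.exp s := Real.exp_pos s
    rw [inv_mul_le_iff₀ h4]
    linarith
  have hΦabs : ‖Φa‖ ≤ 256*(2+5*K)/N^3 := by
    rw [hΦa, norm_mul, norm_div, Complex.norm_exp]
    have hNare : ((N:ℂ)*(a:ℂ)).re = N*a := by
      rw [← Complex.ofReal_mul]; exact Complex.ofReal_re _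
    rw [hNare, hNa]
    have hden : ‖2*(N:ℂ)^3‖ = 2*N^3 := by
      rw [norm_mul, norm_pow, Complex.norm_two, Complex.norm_real, Real.norm_eq_abs, abs_of_pos hN0]
    rw [hden]
    have hw : ((N:ℂ)^2*(a:ℂ)^2 - 2*(N:ℂ)*(a:ℂ) + 2) = ((N^2*a^2 - 2*N*a + 2 : ℝ) : ℂ) := by
      push_cast; ring
    have hNa2 : N^2*a^2 = N := by
      rw [haa]; field_simp
    have hwabs : ‖(N:ℂ)^2*(a:ℂ)^2 - 2*(N:ℂ)*(a:ℂ) + 2‖ = N + 2*s + 2 := by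
      rw [hw, Complex.norm_real, Real.norm_eq_abs]
      rw [show N^2*a^2 - 2*N*a + 2 = N + 2*s + 2 by linear_combination hNa2 - 2*hNa]
      exact _root_.abs_of_nonneg (by positivity)
    have hnum : ‖2*(N:ℂ)^2 + d * ((N:ℂ)^2*(a:ℂ)^2 - 2*(N:ℂ)*(a:ℂ) + 2)‖
        ≤ 2*N^2 + 5*K*N^2 := by
      calc ‖2*(N:ℂ)^2 + d * _‖
          ≤ ‖2*(N:ℂ)^2‖ + ‖d * ((N:ℂ)^2*(a:ℂ)^2 - 2*(N:ℂ)*(a:ℂ) + 2)‖ :=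
            norm_add_le _ _
        _ ≤ 2*N^2 + 5*K*N^2 := by
            rw [norm_mul, norm_mul, norm_pow, Complex.norm_two, Complex.norm_real, Real.norm_eq_abs,
              abs_of_pos hN0, hwabs]
            have hd5 : ‖d‖ * (N + 2*s + 2) ≤ (K*N) * (5*N) := by
              apply mul_le_mul hd _ (by positivity) (by positivity)
              nlinarith
            nlinarith
    calc Real.exp (-s) * (‖2*(N:ℂ)^2 + d * ((N:ℂ)^2*(a:ℂ)^2 - 2*(N:ℂ)*(a:ℂ) + 2)‖
            / (2*N^3))
        ≤ (256/N^2) * ((2*N^2 + 5*K*N^2)/(2*N^3)) := by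
          apply mul_le_mul hexps _ (by positivity) (by positivity)
          apply div_le_div_of_nonneg_right hnum (by positivity) |>.trans_eq rfl
        _ ≤ 256*(2+5*K)/N^3 := by
          rw [div_mul_div_comm]
          rw [div_le_div_iff₀ (by positivity) (by positivity)]
          ring_nf
          have h5 : 0 < N^5 := pow_pos hN0 5
          nlinarith [mul_pos h5 hK, h5]
  -- put it together
  rw [hsplit]
  calc ‖(∫ t in a..(0:ℝ),
          (Complex.exp ((N:ℂ)*t + d*(t:ℂ)^2/2 + E t) - m t)) - Φa‖
      ≤ ‖∫ t in a..(0:ℝ),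
          (Complex.exp ((N:ℂ)*t + d*(t:ℂ)^2/2 + E t) - m t)‖ + ‖Φa‖ := by
        exact norm_sub_le _ _
    _ ≤ (24*A + 6*M)/N^3 + 256*(2+5*K)/N^3 := add_le_add (herr.trans hbint_le) hΦabs
    _ = (256 * (2 + 5 * K) + 24 * A + 6 * M) / N ^ 3 := by ring
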